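/- Let (X, μ, h) be a probability measure preserving system. Let 𝓛 be a linear subspace of L²(X, μ) containing the constant functions and let ‖·‖_𝓛 be a norm on 𝓛. Suppose there exist δ, C > 0 such that for every φ ∈ L^∞(X, μ), every ψ ∈ 𝓛 and every n ∈ ℕ, |∫_X φ(h^n x) ψ(x) dμ(x) − ∫_X φ dμ · ∫_X ψ dμ| ≤ C ‖φ‖_{L^∞} ‖ψ‖_𝓛 n^{−δ}. Then for every k ∈ ℕ, the system (X, μ, h) is k-mixing with rate n^{−δ} for the vector space 𝓛 ∩ L^∞(X, μ): for any f_0, f_1, …, f_k ∈ 𝓛 ∩ L^∞(X, μ) there is a constant C' (depending on the functions) such that for all pairwise distinct n_0, n_1, …, n_k ∈ ℕ, |∫_X f_0(h^{n_0}x) ⋯ f_k(h^{n_k}x) dμ − μ(f_0) ⋯ μ(f_k)| ≤ C' (min_{i≠j} |n_i − n_j|)^{−δ}. -/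

import Mathlib

open MeasureTheory Filter

/-- `min_{i ≠ j} |n_i - n_j|` for a tuple of natural numbers. -/
noncomputable def minGapNat {k : ℕ} (n : Fin k → ℕ) : ℕ :=
  sInf {d : ℕ | ∃ i j, i ≠ j ∧ d = ((n i : ℤ) - (n j : ℤ)).natAbs}

lemma minGapNat_le {k : ℕ} (n : Fin k → ℕ) {i j : Fin k} (hij : i ≠ j) :
    minGapNat n ≤ ((n i : ℤ) - (n j : ℤ)).natAbs :=
  Nat.sInf_le ⟨i, j, hij, rfl⟩

lemma one_le_minGapNat {k : ℕ} (n : Fin (k + 2) → ℕ) (hn : Function.Injective n) :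
    1 ≤ minGapNat n := by
  have hne : {d : ℕ | ∃ i j, i ≠ j ∧ d = ((n i : ℤ) - (n j : ℤ)).natAbs}.Nonempty := by
    refine ⟨((n 0 : ℤ) - (n 1 : ℤ)).natAbs, 0, 1, ?_, rfl⟩
    intro hh
    have : (0 : Fin (k + 2)).val = (1 : Fin (k + 2)).val := by rw [hh]
    simp [Fin.val_zero, Fin.val_one] at this
  obtain ⟨i, j, hij, hd⟩ := Nat.sInf_mem hne
  have hne' : n i ≠ n j := fun hh => hij (hn hh)
  have hd' : minGapNat n = ((n i : ℤ) - (n j : ℤ)).natAbs := hd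
  omega

lemma integral_comp_iterate {X : Type*} [MeasurableSpace X] {μ : Measure X}
    {h : X → X} (hpres : MeasurePreserving h μ μ) (m : ℕ)
    {F : X → ℝ} (hF : Measurable F) :
    ∫ x, F (h^[m] x) ∂μ = ∫ x, F x ∂μ := by
  conv_rhs => rw [← (hpres.iterate m).map_eq]
  rw [integral_map (hpres.iterate m).measurable.aemeasurable hF.aestronglyMeasurable]

lemma aux_mixing
    {X : Type*} [MeasurableSpace X] (μ : Measure X) [IsProbabilityMeasure μ]
    (h : X → X) (hmeas : Measurable h) (hpres : MeasurePreserving h μ μ)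
    (𝓛 : Submodule ℝ (X → ℝ))
    (h𝓛meas : ∀ f ∈ 𝓛, Measurable f)
    (nrm : (X → ℝ) → ℝ)
    (hnrm_nonneg : ∀ ψ ∈ 𝓛, 0 ≤ nrm ψ)
    (δ C : ℝ) (hδ : 0 < δ) (hC : 0 < C)
    (hcorr : ∀ φ : X → ℝ, Measurable φ → MemLp φ ⊤ μ → ∀ ψ ∈ 𝓛, ∀ n : ℕ, 1 ≤ n →
      |(∫ x, φ (h^[n] x) * ψ x ∂μ) - (∫ x, φ x ∂μ) * ∫ x, ψ x ∂μ| ≤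
        C * (eLpNorm φ ⊤ μ).toReal * nrm ψ * (n : ℝ) ^ (-δ)) :
    ∀ k : ℕ, ∀ f : Fin (k + 1) → X → ℝ, (∀ i, f i ∈ 𝓛 ∧ MemLp (f i) ⊤ μ) →
      ∃ C' : ℝ, 0 ≤ C' ∧ ∀ n : Fin (k + 1) → ℕ, Function.Injective n →
        |(∫ x, ∏ i, f i (h^[n i] x) ∂μ) - ∏ i, ∫ x, f i x ∂μ| ≤
          C' * (minGapNat n : ℝ) ^ (-δ) := by
  intro k
  induction k with
  | zero =>
    intro f hf
    refine ⟨0, le_refl 0, fun n hn => ?_⟩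
    have key : ∫ x, f 0 (h^[n 0] x) ∂μ = ∫ x, f 0 x ∂μ :=
      integral_comp_iterate hpres (n 0) (h𝓛meas _ (hf 0).1)
    have hp1 : (∫ x, ∏ i, f i (h^[n i] x) ∂μ) = ∫ x, f 0 (h^[n 0] x) ∂μ := by
      congr 1
      funext x
      exact Fin.prod_univ_one fun i => f i (h^[n i] x)
    have hp2 : (∏ i, ∫ x, f i x ∂μ) = ∫ x, f 0 x ∂μ :=
      Fin.prod_univ_one fun i => ∫ x, f i x ∂μ
    rw [hp1, hp2, key, sub_self, abs_zero, zero_mul]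
  | succ k ih =>
    intro f hf
    set B : Fin (k + 2) → ℝ := fun i => (eLpNorm (f i) ⊤ μ).toReal with hB
    have hBnn : ∀ i, 0 ≤ B i := fun i => ENNReal.toReal_nonneg
    have IH : ∀ j : Fin (k + 2), ∃ Cj : ℝ, 0 ≤ Cj ∧ ∀ m : Fin (k + 1) → ℕ,
        Function.Injective m →
        |(∫ x, ∏ i, f (j.succAbove i) (h^[m i] x) ∂μ) -
            ∏ i, ∫ x, f (j.succAbove i) x ∂μ| ≤
          Cj * (minGapNat m : ℝ) ^ (-δ) :=
      fun j => ih (fun i => f (j.succAbove i)) (fun i => hf _)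
    choose Cj hCj0 hCj using IH
    have hterm_nonneg : ∀ j : Fin (k + 2),
        0 ≤ C * (∏ i : Fin (k + 1), B (j.succAbove i)) * nrm (f j)
            + |∫ x, f j x ∂μ| * Cj j := by
      intro j
      have h1 : 0 ≤ C * (∏ i : Fin (k + 1), B (j.succAbove i)) * nrm (f j) :=
        mul_nonneg (mul_nonneg hC.le (Finset.prod_nonneg fun i _ => hBnn _))
          (hnrm_nonneg _ (hf j).1)
      have h2 : 0 ≤ |∫ x, f j x ∂μ| * Cj j := mul_nonneg (abs_nonneg _) (hCj0 j)
      linarith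
    refine ⟨∑ j : Fin (k + 2), (C * (∏ i : Fin (k + 1), B (j.succAbove i)) * nrm (f j)
        + |∫ x, f j x ∂μ| * Cj j), Finset.sum_nonneg fun j _ => hterm_nonneg j, ?_⟩
    intro n hn
    obtain ⟨j, -, hj⟩ := Finset.exists_min_image Finset.univ n ⟨0, Finset.mem_univ 0⟩
    obtain ⟨i₀, -, hi₀⟩ := Finset.exists_min_image Finset.univ
      (fun i => n (j.succAbove i)) ⟨0, Finset.mem_univ 0⟩
    have hjle : ∀ i, n j ≤ n i := fun i => hj i (Finset.mem_univ i)
    set g : ℕ := n (j.succAbove i₀) - n j with hg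
    have hgle : ∀ i : Fin (k + 1), n j + g ≤ n (j.succAbove i) := by
      intro i
      have h1 := hi₀ i (Finset.mem_univ i)
      have h2 := hjle (j.succAbove i₀)
      omega
    have hminGap1 : 1 ≤ minGapNat n := one_le_minGapNat n hn
    have hgapg : minGapNat n ≤ g := by
      have h1 := minGapNat_le n (Fin.succAbove_ne j i₀)
      have h2 := hjle (j.succAbove i₀)
      omega
    have hg1 : 1 ≤ g := le_trans hminGap1 hgapg
    set m : Fin (k + 1) → ℕ := fun i => n (j.succAbove i) - (n j + g) with hm
    have hmi : ∀ i, m i = n (j.succAbove i) - (n j + g) := fun i => rfl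
    have hmid : ∀ i, n (j.succAbove i) = m i + g + n j := by
      intro i
      have h1 := hgle i
      have h2 := hmi i
      omega
    have hminj : Function.Injective m := by
      intro a b hab
      have ha := hmid a
      have hb := hmid b
      have : n (j.succAbove a) = n (j.succAbove b) := by omega
      exact Fin.succAbove_right_injective (hn this)
    have hminGapR : (0 : ℝ) < (minGapNat n : ℝ) := by
      exact_mod_cast Nat.lt_of_lt_of_le Nat.zero_lt_one hminGap1
    have hgapcmp : ((minGapNat m : ℝ)) ^ (-δ) ≤ ((minGapNat n : ℝ)) ^ (-δ) := by
      rcases Nat.eq_zero_or_pos (minGapNat m) with h0 | hpos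
      · rw [h0]
        rw [Nat.cast_zero, Real.zero_rpow (by linarith : -δ ≠ 0)]
        positivity
      · have hne : {d : ℕ | ∃ i j', i ≠ j' ∧
            d = ((m i : ℤ) - (m j' : ℤ)).natAbs}.Nonempty := by
          by_contra hc
          rw [Set.not_nonempty_iff_eq_empty] at hc
          have : minGapNat m = 0 := by
            rw [minGapNat, hc, Nat.sInf_empty]
          omega
        obtain ⟨a, b, hab, hd⟩ := Nat.sInf_mem hne
        have hd' : minGapNat m = ((m a : ℤ) - (m b : ℤ)).natAbs := hd
        have hsub : minGapNat n ≤ minGapNat m := by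
          have h1 := minGapNat_le n (show j.succAbove a ≠ j.succAbove b from
            fun hh => hab (Fin.succAbove_right_injective hh))
          have h2 := hmid a
          have h3 := hmid b
          omega
        have hcast : (minGapNat n : ℝ) ≤ (minGapNat m : ℝ) := by exact_mod_cast hsub
        exact Real.rpow_le_rpow_of_nonpos hminGapR hcast (by linarith)
    set φ : X → ℝ := fun x => ∏ i : Fin (k + 1), f (j.succAbove i) (h^[m i] x) with hφ
    have hφmeas : Measurable φ := by
      apply Finset.measurable_prod
      intro i _
      exact (h𝓛meas _ (hf _).1).comp (hmeas.iterate (m i))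
    have hae : ∀ p : Fin (k + 2), ∀ l : ℕ, ∀ᵐ x ∂μ, ‖f p (h^[l] x)‖ ≤ B p := by
      intro p l
      have htop : eLpNormEssSup (f p) μ ≠ ⊤ := by
        have h2 := (hf p).2.2
        rw [eLpNorm_exponent_top] at h2
        exact h2.ne
      have h1 : ∀ᵐ x ∂μ, ‖f p x‖ ≤ B p := by
        have h0 : ∀ᵐ y ∂μ, (‖f p y‖₊ : ENNReal) ≤ eLpNormEssSup (f p) μ :=
          ae_le_eLpNormEssSup
        filter_upwards [h0] with x hx
        have h3 : ((‖f p x‖₊ : ENNReal)).toReal ≤ (eLpNormEssSup (f p) μ).toReal :=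
          ENNReal.toReal_mono htop hx
        simpa [hB, eLpNorm_exponent_top] using h3
      exact ((hpres.iterate l).quasiMeasurePreserving).ae h1
    have hφbound : ∀ᵐ x ∂μ, ‖φ x‖ ≤ ∏ i : Fin (k + 1), B (j.succAbove i) := by
      have h1 := ae_all_iff.mpr (fun i : Fin (k + 1) => hae (j.succAbove i) (m i))
      filter_upwards [h1] with x hx
      calc ‖φ x‖ = |∏ i : Fin (k + 1), f (j.succAbove i) (h^[m i] x)| := by
            rw [Real.norm_eq_abs]
        _ ≤ ∏ i : Fin (k + 1), |f (j.succAbove i) (h^[m i] x)| :=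
            (Finset.abs_prod _ _).le
        _ ≤ ∏ i : Fin (k + 1), B (j.succAbove i) :=
            Finset.prod_le_prod (fun i _ => abs_nonneg _)
              (fun i _ => by simpa [Real.norm_eq_abs] using hx i)
    have hφmem : MemLp φ ⊤ μ :=
      memLp_top_of_bound hφmeas.aestronglyMeasurable _ hφbound
    have hφnorm : (eLpNorm φ ⊤ μ).toReal ≤ ∏ i : Fin (k + 1), B (j.succAbove i) := by
      have h1 : eLpNorm φ ⊤ μ ≤ ENNReal.ofReal (∏ i : Fin (k + 1), B (j.succAbove i)) := by
        rw [eLpNorm_exponent_top]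
        exact eLpNormEssSup_le_of_ae_bound hφbound
      calc (eLpNorm φ ⊤ μ).toReal
          ≤ (ENNReal.ofReal (∏ i : Fin (k + 1), B (j.succAbove i))).toReal :=
            ENNReal.toReal_mono ENNReal.ofReal_ne_top h1
        _ = ∏ i : Fin (k + 1), B (j.succAbove i) :=
            ENNReal.toReal_ofReal (Finset.prod_nonneg fun i _ => hBnn _)
    have key : ∫ x, ∏ i, f i (h^[n i] x) ∂μ = ∫ x, φ (h^[g] x) * f j x ∂μ := by
      have e1 : (fun x => ∏ i, f i (h^[n i] x))
          = fun x => (fun y => φ (h^[g] y) * f j y) (h^[n j] x) := by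
        funext x
        rw [Fin.prod_univ_succAbove (fun i => f i (h^[n i] x)) j]
        simp only [hφ]
        rw [mul_comm]
        congr 1
        apply Finset.prod_congr rfl
        intro i _
        congr 1
        rw [← Function.iterate_add_apply, ← Function.iterate_add_apply]
        congr 1
        have := hmid i
        omega
      rw [e1]
      exact integral_comp_iterate hpres (n j)
        ((hφmeas.comp (hmeas.iterate g)).mul (h𝓛meas _ (hf j).1))
    have hc1 := hcorr φ hφmeas hφmem (f j) (hf j).1 g hg1
    have hc2 : |(∫ x, φ x ∂μ) - ∏ i, ∫ x, f (j.succAbove i) x ∂μ| ≤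
        Cj j * (minGapNat m : ℝ) ^ (-δ) := hCj j m hminj
    have hrpow_nonneg : (0 : ℝ) ≤ (minGapNat n : ℝ) ^ (-δ) := by positivity
    have hgr : ((g : ℝ)) ^ (-δ) ≤ (minGapNat n : ℝ) ^ (-δ) :=
      Real.rpow_le_rpow_of_nonpos hminGapR (by exact_mod_cast hgapg) (by linarith)
    have t1 : |(∫ x, φ (h^[g] x) * f j x ∂μ) - (∫ x, φ x ∂μ) * ∫ x, f j x ∂μ|
        ≤ C * (∏ i : Fin (k + 1), B (j.succAbove i)) * nrm (f j) *
            (minGapNat n : ℝ) ^ (-δ) := by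
      refine hc1.trans ?_
      have hnrmj := hnrm_nonneg _ (hf j).1
      have h1 : C * (eLpNorm φ ⊤ μ).toReal * nrm (f j) ≤
          C * (∏ i : Fin (k + 1), B (j.succAbove i)) * nrm (f j) :=
        mul_le_mul_of_nonneg_right (mul_le_mul_of_nonneg_left hφnorm hC.le) hnrmj
      have h2 : 0 ≤ C * (eLpNorm φ ⊤ μ).toReal * nrm (f j) :=
        mul_nonneg (mul_nonneg hC.le ENNReal.toReal_nonneg) hnrmj
      calc C * (eLpNorm φ ⊤ μ).toReal * nrm (f j) * (g : ℝ) ^ (-δ)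
          ≤ C * (eLpNorm φ ⊤ μ).toReal * nrm (f j) * (minGapNat n : ℝ) ^ (-δ) :=
            mul_le_mul_of_nonneg_left hgr h2
        _ ≤ C * (∏ i : Fin (k + 1), B (j.succAbove i)) * nrm (f j) *
              (minGapNat n : ℝ) ^ (-δ) :=
            mul_le_mul_of_nonneg_right h1 hrpow_nonneg
    have t2 : |(∫ x, φ x ∂μ) - ∏ i, ∫ x, f (j.succAbove i) x ∂μ| ≤
        Cj j * (minGapNat n : ℝ) ^ (-δ) := by
      refine hc2.trans ?_
      exact mul_le_mul_of_nonneg_left hgapcmp (hCj0 j)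
    rw [key, Fin.prod_univ_succAbove (fun i => ∫ x, f i x ∂μ) j]
    have expand : (∫ x, φ (h^[g] x) * f j x ∂μ) -
        (∫ x, f j x ∂μ) * ∏ i, ∫ x, f (j.succAbove i) x ∂μ
        = ((∫ x, φ (h^[g] x) * f j x ∂μ) - (∫ x, φ x ∂μ) * ∫ x, f j x ∂μ)
          + (∫ x, f j x ∂μ) *
            ((∫ x, φ x ∂μ) - ∏ i, ∫ x, f (j.succAbove i) x ∂μ) := by ring
    rw [expand]
    refine (abs_add_le _ _).trans ?_
    have t2' : |(∫ x, f j x ∂μ) *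
        ((∫ x, φ x ∂μ) - ∏ i, ∫ x, f (j.succAbove i) x ∂μ)| ≤
        |∫ x, f j x ∂μ| * (Cj j * (minGapNat n : ℝ) ^ (-δ)) := by
      rw [abs_mul]
      exact mul_le_mul_of_nonneg_left t2 (abs_nonneg _)
    have hfinal : C * (∏ i : Fin (k + 1), B (j.succAbove i)) * nrm (f j) *
          (minGapNat n : ℝ) ^ (-δ)
        + |∫ x, f j x ∂μ| * (Cj j * (minGapNat n : ℝ) ^ (-δ))
        = (C * (∏ i : Fin (k + 1), B (j.succAbove i)) * nrm (f j)
            + |∫ x, f j x ∂μ| * Cj j) * (minGapNat n : ℝ) ^ (-δ) := by ring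
    calc |(∫ x, φ (h^[g] x) * f j x ∂μ) - (∫ x, φ x ∂μ) * ∫ x, f j x ∂μ|
          + |(∫ x, f j x ∂μ) *
              ((∫ x, φ x ∂μ) - ∏ i, ∫ x, f (j.succAbove i) x ∂μ)|
        ≤ C * (∏ i : Fin (k + 1), B (j.succAbove i)) * nrm (f j) *
            (minGapNat n : ℝ) ^ (-δ)
          + |∫ x, f j x ∂μ| * (Cj j * (minGapNat n : ℝ) ^ (-δ)) := add_le_add t1 t2'
      _ = (C * (∏ i : Fin (k + 1), B (j.succAbove i)) * nrm (f j)
            + |∫ x, f j x ∂μ| * Cj j) * (minGapNat n : ℝ) ^ (-δ) := hfinal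
      _ ≤ (∑ j' : Fin (k + 2), (C * (∏ i : Fin (k + 1), B (j'.succAbove i)) * nrm (f j')
            + |∫ x, f j' x ∂μ| * Cj j')) * (minGapNat n : ℝ) ^ (-δ) :=
          mul_le_mul_of_nonneg_right
            (Finset.single_le_sum (fun i _ => hterm_nonneg i) (Finset.mem_univ j))
            hrpow_nonneg

theorem multiple_mixing_of_effective_decay
    {X : Type*} [MeasurableSpace X] (μ : Measure X) [IsProbabilityMeasure μ]
    (h : X → X) (hmeas : Measurable h) (hpres : MeasurePreserving h μ μ)
    (𝓛 : Submodule ℝ (X → ℝ))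
    (h𝓛meas : ∀ f ∈ 𝓛, Measurable f)
    (h𝓛L2 : ∀ f ∈ 𝓛, MemLp f 2 μ)
    (h𝓛const : (fun _ : X => (1 : ℝ)) ∈ 𝓛)
    (nrm : (X → ℝ) → ℝ)
    (hnrm_nonneg : ∀ ψ ∈ 𝓛, 0 ≤ nrm ψ)
    (hnrm_definite : ∀ ψ ∈ 𝓛, nrm ψ = 0 → ψ = 0)
    (hnrm_smul : ∀ (a : ℝ), ∀ ψ ∈ 𝓛, nrm (a • ψ) = |a| * nrm ψ)
    (hnrm_add : ∀ ψ₁ ∈ 𝓛, ∀ ψ₂ ∈ 𝓛, nrm (ψ₁ + ψ₂) ≤ nrm ψ₁ + nrm ψ₂)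
    (δ C : ℝ) (hδ : 0 < δ) (hC : 0 < C)
    (hcorr : ∀ φ : X → ℝ, Measurable φ → MemLp φ ⊤ μ → ∀ ψ ∈ 𝓛, ∀ n : ℕ, 1 ≤ n →
      |(∫ x, φ (h^[n] x) * ψ x ∂μ) - (∫ x, φ x ∂μ) * ∫ x, ψ x ∂μ| ≤
        C * (eLpNorm φ ⊤ μ).toReal * nrm ψ * (n : ℝ) ^ (-δ)) :
    ∀ k : ℕ, 1 ≤ k →
      ∀ f : Fin (k + 1) → X → ℝ, (∀ i, f i ∈ 𝓛 ∧ MemLp (f i) ⊤ μ) →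
        ∃ C' : ℝ, ∀ n : Fin (k + 1) → ℕ, (∀ i, 1 ≤ n i) → Function.Injective n →
          |(∫ x, ∏ i, f i (h^[n i] x) ∂μ) - ∏ i, ∫ x, f i x ∂μ| ≤
            C' * (minGapNat n : ℝ) ^ (-δ) := by
  intro k _ f hf
  obtain ⟨C', -, hC'⟩ := aux_mixing μ h hmeas hpres 𝓛 h𝓛meas nrm hnrm_nonneg δ C hδ hC
    hcorr k f hf
  exact ⟨C', fun n _ hninj => hC' n hninj⟩
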